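/- arXiv:2206.07746 — 5 statements merged into one kernel-verified Lean document; each statement's English description precedes it below -/
import Mathlib

section
/- Let C ≥ 1, d ≥ 1, K ≥ 1. Suppose there are N real graphs, the i-th having (normalized) adjacency matrix A_(i) ∈ ℝ^{m_i×m_i}, node feature matrix X_(i) ∈ ℝ^{m_i×d} and label y_i ∈ {0,…,C−1}, and N' ≥ 1 synthetic graphs, the i-th having adjacency matrix A'_(i) ∈ ℝ^{n_i×n_i}, feature matrix X'_(i) ∈ ℝ^{n_i×d} and label y'_i ∈ {0,…,C−1}. With the K-layer sum-pooling SGC classifier f_W(A,X) = 1ᵀA^K X W ∈ ℝ^C for W ∈ ℝ^{d×C}, define ℓ_T(W) = Σ_{i=1}^{N} ℓ(f_W(A_(i),X_(i)), y_i) and ℓ_S(W) = (1/N') Σ_{i=1}^{N'} ℓ(f_W(A'_(i),X'_(i)), y'_i), where ℓ is the softmax cross-entropy loss. Let L = ((C−1)/(C·N'))·√(Σ_{i=1}^{N'} ‖1ᵀ(A'_(i))^K X'_(i)‖²) and assume L > 0. Fix M > 0, an integer T ≥ 1, set η = M/(√T·L), and let W_0, W_1, …, W_{T−1} ∈ ℝ^{d×C}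 be the gradient-descent iterates W_{t+1} = W_t − η·∇ℓ_S(W_t). Let W* ∈ ℝ^{d×C} and assume (i) ‖W_t − W*‖ ≤ √2·M for all 0 ≤ t ≤ T−1, and (ii) ‖∇ℓ_S(W)‖ ≤ L for all W ∈ ℝ^{d×C}. Then min_{0≤t≤T−1} (ℓ_T(W_t) − ℓ_T(W*)) ≤ (√2·M/T)·Σ_{t=0}^{T−1} ‖∇ℓ_T(W_t) − ∇ℓ_S(W_t)‖ + (3M/(2√T))·((C−1)/(C·N'))·√(Σ_{i=1}^{N'} ‖1ᵀ(A'_(i))^K X'_(i)‖²). -/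
open scoped BigOperators

/-- The softmax cross-entropy loss of a logit vector `z : ℝ^C` with label `y`. -/
noncomputable def crossEntropy {C : ℕ} (z : Fin C → ℝ) (y : Fin C) : ℝ :=
  Real.log (∑ c, Real.exp (z c)) - z y

/-- The logits of the `K`-layer sum-pooling SGC classifier `1ᵀ A^K X W ∈ ℝ^C`. -/
noncomputable def sgcSumLogits {n d C : ℕ} (K : ℕ)
    (A : Matrix (Fin n) (Fin n) ℝ) (X : Matrix (Fin n) (Fin d) ℝ)
    (W : EuclideanSpace ℝ (Fin d × Fin C)) : Fin C → ℝ :=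
  fun c => ∑ j, (∑ u, ∑ u', (A ^ K) u u' * X u' j) * W (j, c)

open scoped RealInnerProductSpace

lemma lse_convexOn (C : ℕ) :
    ConvexOn ℝ Set.univ (fun z : Fin C → ℝ => Real.log (∑ c, Real.exp (z c))) := by
  rcases Nat.eq_zero_or_pos C with h0 | hCpos
  · subst h0
    simpa using convexOn_const (Real.log 0) convex_univ
  have hne : (Finset.univ : Finset (Fin C)).Nonempty := by
    simpa [Finset.univ_nonempty_iff] using Fin.pos_iff_nonempty.mp hCpos
  refine ⟨convex_univ, ?_⟩
  intro x _ y _ a b ha hb hab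
  have hP : 0 < ∑ c, Real.exp (x c) := Finset.sum_pos (fun c _ => Real.exp_pos _) hne
  have hQ : 0 < ∑ c, Real.exp (y c) := Finset.sum_pos (fun c _ => Real.exp_pos _) hne
  rcases eq_or_lt_of_le ha with ha0 | ha
  · have hb1 : b = 1 := by linarith
    simp [← ha0, hb1]
  rcases eq_or_lt_of_le hb with hb0 | hb
  · have ha1 : a = 1 := by linarith
    simp [← hb0, ha1]
  have ha1 : a < 1 := by linarith
  show Real.log (∑ c, Real.exp ((a • x + b • y) c))
      ≤ a • Real.log (∑ c, Real.exp (x c)) + b • Real.log (∑ c, Real.exp (y c))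
  have hpq : Real.HolderConjugate (1 / a) (1 / b) := by
    refine ⟨?_, by positivity, by positivity⟩
    rw [one_div, one_div, inv_inv, inv_inv, inv_one]
    exact hab
  have holder := Real.inner_le_Lp_mul_Lq_of_nonneg (s := (Finset.univ : Finset (Fin C)))
    (f := fun c => Real.exp (a * x c)) (g := fun c => Real.exp (b * y c)) hpq
    (fun c _ => (Real.exp_pos _).le) (fun c _ => (Real.exp_pos _).le)
  have hfe : ∀ c : Fin C, Real.exp (a * x c) ^ (1 / a) = Real.exp (x c) := by
    intro c
    rw [← Real.exp_mul]
    congr 1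
    field_simp
  have hge : ∀ c : Fin C, Real.exp (b * y c) ^ (1 / b) = Real.exp (y c) := by
    intro c
    rw [← Real.exp_mul]
    congr 1
    field_simp
  have hsum : ∑ c, Real.exp ((a • x + b • y) c)
      ≤ (∑ c, Real.exp (x c)) ^ a * (∑ c, Real.exp (y c)) ^ b := by
    have h1 : ∀ c : Fin C, Real.exp ((a • x + b • y) c)
        = Real.exp (a * x c) * Real.exp (b * y c) := by
      intro c
      simp [Pi.add_apply, Pi.smul_apply, smul_eq_mul, Real.exp_add]
    calc ∑ c, Real.exp ((a • x + b • y) c)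
        = ∑ c, Real.exp (a * x c) * Real.exp (b * y c) := by
          exact Finset.sum_congr rfl fun c _ => h1 c
      _ ≤ (∑ c, Real.exp (a * x c) ^ (1 / a)) ^ (1 / (1 / a)) *
          (∑ c, Real.exp (b * y c) ^ (1 / b)) ^ (1 / (1 / b)) := holder
      _ = (∑ c, Real.exp (x c)) ^ a * (∑ c, Real.exp (y c)) ^ b := by
          rw [one_div_one_div, one_div_one_div]
          congr 1
          · congr 1
            exact Finset.sum_congr rfl fun c _ => hfe c
          · congr 1
            exact Finset.sum_congr rfl fun c _ => hge c
  have hsumpos : 0 < ∑ c, Real.exp ((a • x + b • y) c) :=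
    Finset.sum_pos (fun c _ => Real.exp_pos _) hne
  calc Real.log (∑ c, Real.exp ((a • x + b • y) c))
      ≤ Real.log ((∑ c, Real.exp (x c)) ^ a * (∑ c, Real.exp (y c)) ^ b) :=
        Real.log_le_log hsumpos hsum
    _ = a * Real.log (∑ c, Real.exp (x c)) + b * Real.log (∑ c, Real.exp (y c)) := by
        rw [Real.log_mul (by positivity) (by positivity), Real.log_rpow hP, Real.log_rpow hQ]
    _ = a • Real.log (∑ c, Real.exp (x c)) + b • Real.log (∑ c, Real.exp (y c)) := by
        simp [smul_eq_mul]

lemma ce_convexOn (C : ℕ) (y : Fin C) :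
    ConvexOn ℝ Set.univ (fun z : Fin C → ℝ => crossEntropy z y) := by
  refine ⟨convex_univ, ?_⟩
  intro z1 _ z2 _ s t hs ht hst
  have h := (lse_convexOn C).2 (Set.mem_univ z1) (Set.mem_univ z2) hs ht hst
  show crossEntropy (s • z1 + t • z2) y ≤ s • crossEntropy z1 y + t • crossEntropy z2 y
  simp only [crossEntropy, Pi.add_apply, Pi.smul_apply, smul_eq_mul] at h ⊢
  linarith

lemma ce_lin_convexOn {d C : ℕ} (b : Fin d → ℝ) (y : Fin C) :
    ConvexOn ℝ Set.univ (fun W : EuclideanSpace ℝ (Fin d × Fin C) =>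
      crossEntropy (fun c => ∑ j, b j * W (j, c)) y) := by
  refine ⟨convex_univ, ?_⟩
  intro W1 _ W2 _ s t hs ht hst
  have hz : (fun c => ∑ j, b j * (s • W1 + t • W2) (j, c))
      = s • (fun c => ∑ j, b j * W1 (j, c)) + t • (fun c => ∑ j, b j * W2 (j, c)) := by
    funext c
    simp only [Pi.add_apply, Pi.smul_apply, PiLp.add_apply, PiLp.smul_apply,
      smul_eq_mul, Finset.mul_sum]
    rw [← Finset.sum_add_distrib]
    exact Finset.sum_congr rfl fun j _ => by ring
  show crossEntropy (fun c => ∑ j, b j * (s • W1 + t • W2) (j, c)) y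
      ≤ s • crossEntropy (fun c => ∑ j, b j * W1 (j, c)) y
        + t • crossEntropy (fun c => ∑ j, b j * W2 (j, c)) y
  rw [hz]
  exact (ce_convexOn C y).2 (Set.mem_univ _) (Set.mem_univ _) hs ht hst

lemma ce_lin_diff {d C : ℕ} (hC : 0 < C) (b : Fin d → ℝ) (y : Fin C) :
    Differentiable ℝ (fun W : EuclideanSpace ℝ (Fin d × Fin C) =>
      crossEntropy (fun c => ∑ j, b j * W (j, c)) y) := by
  have hne : (Finset.univ : Finset (Fin C)).Nonempty := by
    simpa [Finset.univ_nonempty_iff] using Fin.pos_iff_nonempty.mp hC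
  have hcoord : ∀ p : Fin d × Fin C,
      Differentiable ℝ (fun W : EuclideanSpace ℝ (Fin d × Fin C) => W p) :=
    fun p => by have := (EuclideanSpace.proj (𝕜 := ℝ) p).differentiable; exact this
  simp only [crossEntropy]
  intro W0
  apply DifferentiableAt.sub
  · apply DifferentiableAt.log
    · exact DifferentiableAt.fun_sum fun c _ =>
        (DifferentiableAt.fun_sum fun j _ => ((hcoord (j, c)) W0).const_mul (b j)).exp
    · exact (Finset.sum_pos (fun c _ => Real.exp_pos _) hne).ne'
  · exact DifferentiableAt.fun_sum fun j _ => ((hcoord (j, y)) W0).const_mul (b j)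

lemma grad_ineq {ι : Type*} [Fintype ι] {f : EuclideanSpace ℝ ι → ℝ}
    (hconv : ConvexOn ℝ Set.univ f) (hdiff : Differentiable ℝ f)
    (x y : EuclideanSpace ℝ ι) :
    f x - f y ≤ ⟪gradient f x, x - y⟫ := by
  have hinner : ⟪gradient f x, x - y⟫ = fderiv ℝ f x (x - y) :=
    InnerProductSpace.toDual_symm_apply
  set v : EuclideanSpace ℝ ι := x - y with hv
  set c : ℝ → EuclideanSpace ℝ ι := fun s => y + s • v with hc
  have hcurve : ∀ s : ℝ, HasDerivAt c v s := by
    intro s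
    simpa [hc] using ((hasDerivAt_id s).smul_const v).const_add y
  set g : ℝ → ℝ := fun s => f (c s) with hg
  have hgd : ∀ s, HasDerivAt g (fderiv ℝ f (c s) v) s := fun s =>
    (hdiff (c s)).hasFDerivAt.comp_hasDerivAt s (hcurve s)
  have hgc : ConvexOn ℝ Set.univ g := by
    have h1 := hconv.comp_affineMap (AffineMap.lineMap y x : ℝ →ᵃ[ℝ] EuclideanSpace ℝ ι)
    have h2 : g = f ∘ (AffineMap.lineMap y x : ℝ →ᵃ[ℝ] EuclideanSpace ℝ ι) := by
      funext s
      simp only [hg, hc, Function.comp_apply, AffineMap.lineMap_apply, vsub_eq_sub,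
        vadd_eq_add, hv]
      rw [add_comm]
    rw [h2]
    simpa using h1
  have hslope := hgc.slope_le_deriv (Set.mem_univ (0 : ℝ)) (Set.mem_univ 1) one_pos
    (hgd 1).differentiableAt
  have hc1 : c 1 = x := by simp [hc, hv]
  have hderiv : deriv g 1 = fderiv ℝ f x (x - y) := by
    rw [(hgd 1).deriv, hc1]
  have h0 : g 0 = f y := by simp [hg, hc]
  have h1 : g 1 = f x := by show f (c 1) = f x; rw [hc1]
  rw [hinner, ← hderiv]
  have : slope g 0 1 = g 1 - g 0 := by simp [slope_def_field]
  rw [this, h0, h1] at hslope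
  exact hslope

lemma convexOn_finset_sum {ι E' : Type*} [AddCommGroup E'] [Module ℝ E'] (t : Finset ι)
    (f : ι → E' → ℝ) (h : ∀ i ∈ t, ConvexOn ℝ Set.univ (f i)) :
    ConvexOn ℝ Set.univ (fun x => ∑ i ∈ t, f i x) := by
  induction t using Finset.cons_induction with
  | empty => simpa using convexOn_const (0 : ℝ) convex_univ
  | cons i s his ih =>
    simp only [Finset.sum_cons]
    exact (h i (Finset.mem_cons_self _ _)).add (ih fun j hj => h j (Finset.mem_cons_of_mem hj))

set_option maxHeartbeats 1000000 in
/-- Theorem 1 of the paper (sum-pooling case): one-step gradient matching bound for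
graph classification with a `K`-layer sum-pooling SGC classifier. -/
theorem one_step_gradient_matching_sum_pooling
    (C d K N N' : ℕ) (hC : 1 ≤ C) (hd : 1 ≤ d) (hK : 1 ≤ K) (hN' : 1 ≤ N')
    (m : Fin N → ℕ)
    (A : ∀ i : Fin N, Matrix (Fin (m i)) (Fin (m i)) ℝ)
    (X : ∀ i : Fin N, Matrix (Fin (m i)) (Fin d) ℝ)
    (y : Fin N → Fin C)
    (n : Fin N' → ℕ)
    (A' : ∀ i : Fin N', Matrix (Fin (n i)) (Fin (n i)) ℝ)
    (X' : ∀ i : Fin N', Matrix (Fin (n i)) (Fin d) ℝ)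
    (y' : Fin N' → Fin C)
    (lossT lossS : EuclideanSpace ℝ (Fin d × Fin C) → ℝ)
    (hlossT : lossT = fun W => ∑ i, crossEntropy (sgcSumLogits K (A i) (X i) W) (y i))
    (hlossS : lossS = fun W =>
      (1 / (N' : ℝ)) * ∑ i, crossEntropy (sgcSumLogits K (A' i) (X' i) W) (y' i))
    (L : ℝ)
    (hL : L = (((C : ℝ) - 1) / ((C : ℝ) * (N' : ℝ))) *
      Real.sqrt (∑ i, ∑ j, (∑ u, ∑ u', ((A' i) ^ K) u u' * X' i u' j) ^ 2))
    (hLpos : 0 < L)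
    (M : ℝ) (hM : 0 < M) (T : ℕ) (hT : 1 ≤ T)
    (η : ℝ) (hη : η = M / (Real.sqrt T * L))
    (W : ℕ → EuclideanSpace ℝ (Fin d × Fin C))
    (hstep : ∀ t, t + 2 ≤ T → W (t + 1) = W t - η • gradient lossS (W t))
    (Wstar : EuclideanSpace ℝ (Fin d × Fin C))
    (hbdd : ∀ t < T, ‖W t - Wstar‖ ≤ Real.sqrt 2 * M)
    (hgrad : ∀ V : EuclideanSpace ℝ (Fin d × Fin C), ‖gradient lossS V‖ ≤ L) :
    ∃ t < T, lossT (W t) - lossT Wstar ≤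
      (Real.sqrt 2 * M / T) *
          ∑ t ∈ Finset.range T, ‖gradient lossT (W t) - gradient lossS (W t)‖ +
        (3 * M / (2 * Real.sqrt T)) * (((C : ℝ) - 1) / ((C : ℝ) * (N' : ℝ))) *
          Real.sqrt (∑ i, ∑ j, (∑ u, ∑ u', ((A' i) ^ K) u u' * X' i u' j) ^ 2) := by
  classical
  have hTpos : (0 : ℝ) < T := by exact_mod_cast hT
  have hsT : 0 < Real.sqrt T := Real.sqrt_pos.mpr hTpos
  have hsT2 : Real.sqrt T * Real.sqrt T = (T : ℝ) := Real.mul_self_sqrt hTpos.le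
  have hηpos : 0 < η := by rw [hη]; positivity
  have hconvT : ConvexOn ℝ Set.univ lossT := by
    rw [hlossT]
    exact convexOn_finset_sum _ _ fun i _ =>
      ce_lin_convexOn (fun j => ∑ u, ∑ u', ((A i) ^ K) u u' * X i u' j) (y i)
  have hdiffT : Differentiable ℝ lossT := by
    rw [hlossT]
    exact Differentiable.fun_sum fun i _ =>
      ce_lin_diff hC (fun j => ∑ u, ∑ u', ((A i) ^ K) u u' * X i u' j) (y i)
  set G : ℕ → EuclideanSpace ℝ (Fin d × Fin C) := fun t => gradient lossS (W t) with hG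
  set DD : ℕ → ℝ := fun t => ‖gradient lossT (W t) - G t‖ with hDD
  set av : ℕ → ℝ := fun t => ‖W t - Wstar‖ ^ 2 with hav
  set rv : ℕ → ℝ := fun t => ‖W t - η • G t - Wstar‖ ^ 2 with hrv
  have hinner_id : ∀ t, (inner ℝ (G t) (W t - Wstar) : ℝ)
      = (av t - rv t) / (2 * η) + (η / 2) * ‖G t‖ ^ 2 := by
    intro t
    have hdecomp : W t - η • G t - Wstar = (W t - Wstar) - η • G t := by abel
    have hr2 : rv t = av t - 2 * (η * (inner ℝ (W t - Wstar) (G t) : ℝ)) + η ^ 2 * ‖G t‖ ^ 2 := by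
      show ‖W t - η • G t - Wstar‖ ^ 2 = ‖W t - Wstar‖ ^ 2
          - 2 * (η * (inner ℝ (W t - Wstar) (G t) : ℝ)) + η ^ 2 * ‖G t‖ ^ 2
      rw [hdecomp, norm_sub_sq_real, real_inner_smul_right, norm_smul, Real.norm_eq_abs,
        abs_of_pos hηpos]
      ring
    have hsym : (inner ℝ (G t) (W t - Wstar) : ℝ) = inner ℝ (W t - Wstar) (G t) :=
      real_inner_comm _ _
    rw [hsym, hr2]
    field_simp
    ring
  have hbdd' : ∀ t < T, av t ≤ 2 * M ^ 2 := by
    intro t ht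
    have h := hbdd t ht
    have hsq2 : Real.sqrt 2 * Real.sqrt 2 = 2 := Real.mul_self_sqrt (by norm_num)
    show ‖W t - Wstar‖ ^ 2 ≤ 2 * M ^ 2
    nlinarith [norm_nonneg (W t - Wstar), Real.sqrt_nonneg 2]
  have hr_ge : ∀ k, k + 1 ≤ T → (if k + 1 < T then av (k + 1) else 0) ≤ rv k := by
    intro k hk
    by_cases h : k + 1 < T
    · rw [if_pos h]
      have hs := hstep k (by omega)
      have heq : av (k + 1) = rv k := by
        show ‖W (k + 1) - Wstar‖ ^ 2 = ‖W k - η • G k - Wstar‖ ^ 2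
        rw [hs]
      exact heq.le
    · rw [if_neg h]
      show (0 : ℝ) ≤ ‖W k - η • G k - Wstar‖ ^ 2
      positivity
  have hteles : ∀ k, k ≤ T →
      (∑ t ∈ Finset.range k, (av t - rv t)) + (if k < T then av k else 0) ≤ av 0 := by
    intro k
    induction k with
    | zero =>
      intro _
      simp only [Finset.range_zero, Finset.sum_empty, zero_add]
      split
      · exact le_rfl
      · show (0 : ℝ) ≤ ‖W 0 - Wstar‖ ^ 2
        positivity
    | succ k ih =>
      intro hk
      have hk' : k ≤ T := by omega
      have ihh := ih hk'
      rw [if_pos (by omega : k < T)] at ihh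
      have h2 := hr_ge k hk
      rw [Finset.sum_range_succ]
      by_cases h : k + 1 < T
      · rw [if_pos h] at h2 ⊢
        linarith
      · rw [if_neg h] at h2 ⊢
        linarith
  have hsum_ar : ∑ t ∈ Finset.range T, (av t - rv t) ≤ 2 * M ^ 2 := by
    have h := hteles T le_rfl
    rw [if_neg (lt_irrefl T)] at h
    have h0 := hbdd' 0 (by omega)
    linarith
  have hstep_loss : ∀ t < T, lossT (W t) - lossT Wstar
      ≤ Real.sqrt 2 * M * DD t + ((av t - rv t) / (2 * η) + (η / 2) * L ^ 2) := by
    intro t ht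
    have h1 := grad_ineq hconvT hdiffT (W t) Wstar
    have h2 : (inner ℝ (gradient lossT (W t)) (W t - Wstar) : ℝ)
        = (inner ℝ (gradient lossT (W t) - G t) (W t - Wstar) : ℝ)
          + (inner ℝ (G t) (W t - Wstar) : ℝ) := by
      rw [← inner_add_left, sub_add_cancel]
    have h3 : (inner ℝ (gradient lossT (W t) - G t) (W t - Wstar) : ℝ)
        ≤ Real.sqrt 2 * M * DD t := by
      calc (inner ℝ (gradient lossT (W t) - G t) (W t - Wstar) : ℝ)
          ≤ ‖gradient lossT (W t) - G t‖ * ‖W t - Wstar‖ := real_inner_le_norm _ _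
        _ ≤ DD t * (Real.sqrt 2 * M) :=
            mul_le_mul_of_nonneg_left (hbdd t ht) (norm_nonneg _)
        _ = Real.sqrt 2 * M * DD t := by ring
    have hg' : ‖G t‖ ≤ L := hgrad (W t)
    have h4 : ‖G t‖ ^ 2 ≤ L ^ 2 := by nlinarith [norm_nonneg (G t)]
    have h6 : (η / 2) * ‖G t‖ ^ 2 ≤ (η / 2) * L ^ 2 :=
      mul_le_mul_of_nonneg_left h4 (by positivity)
    have h5 := hinner_id t
    linarith
  have hsum_loss : ∑ t ∈ Finset.range T, (lossT (W t) - lossT Wstar)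
      ≤ Real.sqrt 2 * M * (∑ t ∈ Finset.range T, DD t)
        + (2 * M ^ 2 / (2 * η) + (T : ℝ) * ((η / 2) * L ^ 2)) := by
    calc ∑ t ∈ Finset.range T, (lossT (W t) - lossT Wstar)
        ≤ ∑ t ∈ Finset.range T,
            (Real.sqrt 2 * M * DD t + ((av t - rv t) / (2 * η) + (η / 2) * L ^ 2)) :=
          Finset.sum_le_sum fun t ht => hstep_loss t (Finset.mem_range.mp ht)
      _ = Real.sqrt 2 * M * (∑ t ∈ Finset.range T, DD t)
            + ((∑ t ∈ Finset.range T, (av t - rv t)) / (2 * η)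
              + (T : ℝ) * ((η / 2) * L ^ 2)) := by
          rw [Finset.sum_add_distrib, Finset.sum_add_distrib, ← Finset.mul_sum,
            ← Finset.sum_div, Finset.sum_const, Finset.card_range, nsmul_eq_mul]
      _ ≤ _ := by
          gcongr
  have hB : 2 * M ^ 2 / (2 * η) + (T : ℝ) * ((η / 2) * L ^ 2)
      = 3 / 2 * M * L * Real.sqrt T := by
    rw [hη]
    field_simp
    linear_combination (-1) * hsT2
  have hR2 : (T : ℝ) * (3 * M / (2 * Real.sqrt T) * L) = 3 / 2 * M * L * Real.sqrt T := by
    field_simp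
    linear_combination (-1) * hsT2
  by_contra hcon
  push_neg at hcon
  have hDDsum : ∑ t ∈ Finset.range T, ‖gradient lossT (W t) - gradient lossS (W t)‖
      = ∑ t ∈ Finset.range T, DD t := rfl
  set S := Real.sqrt (∑ i, ∑ j, (∑ u, ∑ u', ((A' i) ^ K) u u' * X' i u' j) ^ 2) with hS
  set R := (Real.sqrt 2 * M / T) *
      (∑ t ∈ Finset.range T, ‖gradient lossT (W t) - gradient lossS (W t)‖) +
      (3 * M / (2 * Real.sqrt T)) * (((C : ℝ) - 1) / ((C : ℝ) * (N' : ℝ))) * S with hR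
  have hcoefS : (3 * M / (2 * Real.sqrt T)) * (((C : ℝ) - 1) / ((C : ℝ) * (N' : ℝ))) * S
      = 3 * M / (2 * Real.sqrt T) * L := by
    rw [hL, mul_assoc]
  have hsum_gt : (T : ℝ) * R < ∑ t ∈ Finset.range T, (lossT (W t) - lossT Wstar) := by
    have h := Finset.sum_lt_sum_of_nonempty (Finset.nonempty_range_iff.mpr (by omega))
      (f := fun _ : ℕ => R) (fun t ht => hcon t (Finset.mem_range.mp ht))
    rw [Finset.sum_const, Finset.card_range, nsmul_eq_mul] at h
    exact h
  have hTR : (T : ℝ) * R = Real.sqrt 2 * M * (∑ t ∈ Finset.range T, DD t)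
      + 3 / 2 * M * L * Real.sqrt T := by
    rw [hR, hcoefS, hDDsum, mul_add, ← hR2]
    have hTne : (T : ℝ) ≠ 0 := hTpos.ne'
    field_simp
  rw [hTR] at hsum_gt
  rw [hB] at hsum_loss
  linarith
end

section
/- Under the setup of Theorem 1 with sum pooling — real graphs (A_(i), X_(i), y_i) for i = 1,…,N, synthetic graphs (A'_(i), X'_(i), y'_i) for i = 1,…,N', losses ℓ_T(W) = Σ_i ℓ(1ᵀ(A_(i))^K X_(i) W, y_i) and ℓ_S(W) = (1/N') Σ_i ℓ(1ᵀ(A'_(i))^K X'_(i) W, y'_i), L = ((C−1)/(C·N'))·√(Σ_i ‖1ᵀ(A'_(i))^K X'_(i)‖²) > 0, M > 0, T ≥ 1, η = M/(√T·L), iterates W_{t+1} = W_t − η·∇ℓ_S(W_t), a reference point W* with ‖W_t − W*‖ ≤ √2·M for all 0 ≤ t ≤ T−1, and ‖∇ℓ_S(W)‖ ≤ L for all W — assume additionally that the largest gradient gap occurs at the 0-th epoch, i.e., ‖∇ℓ_T(W_0) − ∇ℓ_S(W_0)‖ ≥ ‖∇ℓ_T(W_t) − ∇ℓ_S(W_t)‖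 for all t = 0,1,…,T−1. Then min_{0≤t≤T−1} (ℓ_T(W_t) − ℓ_T(W*)) ≤ √2·M·‖∇ℓ_T(W_0) − ∇ℓ_S(W_0)‖ + (3M/(2√T))·((C−1)/(C·N'))·√(Σ_{i=1}^{N'} ‖1ᵀ(A'_(i))^K X'_(i)‖²). -/
open scoped BigOperators

open scoped RealInnerProductSpace

/-- Hölder-based convexity inequality for log-sum-exp. -/
lemma lse_convex_ineq {C : ℕ} (hC : 0 < C) (z w : Fin C → ℝ) {a b : ℝ}
    (ha : 0 ≤ a) (hb : 0 ≤ b) (hab : a + b = 1) :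
    Real.log (∑ c, Real.exp (a * z c + b * w c)) ≤
      a * Real.log (∑ c, Real.exp (z c)) + b * Real.log (∑ c, Real.exp (w c)) := by
  rcases eq_or_lt_of_le ha with rfl | ha'
  · simp only [zero_add] at hab; subst hab; simp
  rcases eq_or_lt_of_le hb with rfl | hb'
  · simp only [add_zero] at hab; subst hab; simp
  have ha1 : a < 1 := by linarith
  have hpq : Real.HolderConjugate (1/a) (1/b) := by
    constructor
    · rw [one_div, one_div, inv_inv, inv_inv, inv_one]; exact hab
    · positivity
    · positivity
  have hne : (Finset.univ : Finset (Fin C)).Nonempty := ⟨⟨0, hC⟩, Finset.mem_univ _⟩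
  have hz : (0:ℝ) < ∑ c, Real.exp (z c) :=
    Finset.sum_pos (fun c _ => Real.exp_pos _) hne
  have hw : (0:ℝ) < ∑ c, Real.exp (w c) :=
    Finset.sum_pos (fun c _ => Real.exp_pos _) hne
  have hlhs : (0:ℝ) < ∑ c, Real.exp (a * z c + b * w c) :=
    Finset.sum_pos (fun c _ => Real.exp_pos _) hne
  have key := Real.inner_le_Lp_mul_Lq_of_nonneg (s := Finset.univ)
    (f := fun c => Real.exp (z c) ^ a) (g := fun c => Real.exp (w c) ^ b) hpq
    (fun i _ => Real.rpow_nonneg (Real.exp_pos _).le _)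
    (fun i _ => Real.rpow_nonneg (Real.exp_pos _).le _)
  have e1 : ∀ c : Fin C, Real.exp (z c) ^ a * Real.exp (w c) ^ b
      = Real.exp (a * z c + b * w c) := by
    intro c
    rw [Real.exp_add, mul_comm a (z c), mul_comm b (w c), Real.exp_mul, Real.exp_mul]
  have e2 : ∀ c : Fin C, (Real.exp (z c) ^ a) ^ (1/a) = Real.exp (z c) := by
    intro c
    rw [← Real.rpow_mul (Real.exp_pos _).le, mul_one_div, div_self (ne_of_gt ha'),
      Real.rpow_one]
  have e3 : ∀ c : Fin C, (Real.exp (w c) ^ b) ^ (1/b) = Real.exp (w c) := by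
    intro c
    rw [← Real.rpow_mul (Real.exp_pos _).le, mul_one_div, div_self (ne_of_gt hb'),
      Real.rpow_one]
  simp only [e1, e2, e3, one_div_one_div] at key
  calc Real.log (∑ c, Real.exp (a * z c + b * w c))
      ≤ Real.log ((∑ c, Real.exp (z c)) ^ a * (∑ c, Real.exp (w c)) ^ b) :=
        Real.log_le_log hlhs key
    _ = a * Real.log (∑ c, Real.exp (z c)) + b * Real.log (∑ c, Real.exp (w c)) := by
        rw [Real.log_mul (ne_of_gt (Real.rpow_pos_of_pos hz _))
          (ne_of_gt (Real.rpow_pos_of_pos hw _)), Real.log_rpow hz, Real.log_rpow hw]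

/-- First-order condition for a convex differentiable function. -/
lemma convex_support_ineq {E : Type*} [NormedAddCommGroup E] [InnerProductSpace ℝ E]
    [CompleteSpace E] {f : E → ℝ} (hconv : ConvexOn ℝ Set.univ f)
    (hdiff : Differentiable ℝ f) (x v : E) :
    f x - f v ≤ ⟪gradient f x, x - v⟫ := by
  set φ : ℝ → ℝ := fun s => f (x + s • (v - x)) with hφdef
  have hline : ∀ s : ℝ, HasDerivAt (fun s : ℝ => x + s • (v - x)) (v - x) s := by
    intro s
    simpa using ((hasDerivAt_id s).smul_const (v - x)).const_add x
  have hφ : ∀ s : ℝ, HasDerivAt φ (fderiv ℝ f (x + s • (v - x)) (v - x)) s := by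
    intro s
    exact ((hdiff _).hasFDerivAt).comp_hasDerivAt s (hline s)
  have hφconv : ConvexOn ℝ Set.univ φ := by
    refine ⟨convex_univ, fun p _ q _ a b ha hb hab => ?_⟩
    have hcomb : x + (a • p + b • q) • (v - x)
        = a • (x + p • (v - x)) + b • (x + q • (v - x)) := by
      have h1 : a + b = (1:ℝ) := hab
      rw [smul_eq_mul, smul_eq_mul]
      match_scalars <;> simp <;> nlinarith [h1]
    simp only [hφdef, hcomb]
    exact hconv.2 (Set.mem_univ _) (Set.mem_univ _) ha hb hab
  have key := hφconv.le_slope_of_hasDerivAt (Set.mem_univ (0:ℝ)) (Set.mem_univ (1:ℝ))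
    one_pos (by simpa using hφ 0)
  have hslope : slope φ 0 1 = f v - f x := by
    simp [slope_def_field, hφdef]
  rw [hslope] at key
  have hinner : ⟪gradient f x, x - v⟫ = fderiv ℝ f x (x - v) := by
    rw [gradient, InnerProductSpace.toDual_symm_apply]
  have hneg : fderiv ℝ f x (x - v) = -(fderiv ℝ f x (v - x)) := by
    rw [← map_neg]; congr 1; abel
  rw [hinner, hneg]
  rw [← map_sub] at key
  linarith

lemma sgc_lin {n d C : ℕ} (K : ℕ) (A : Matrix (Fin n) (Fin n) ℝ)
    (X : Matrix (Fin n) (Fin d) ℝ) (a b : ℝ)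
    (x v : EuclideanSpace ℝ (Fin d × Fin C)) (c : Fin C) :
    sgcSumLogits K A X (a • x + b • v) c
      = a * sgcSumLogits K A X x c + b * sgcSumLogits K A X v c := by
  unfold sgcSumLogits
  rw [Finset.mul_sum, Finset.mul_sum, ← Finset.sum_add_distrib]
  refine Finset.sum_congr rfl fun j _ => ?_
  have h : (a • x + b • v) (j, c) = a * x (j, c) + b * v (j, c) := rfl
  rw [h]; ring

lemma sgc_differentiable {n d C : ℕ} (K : ℕ) (A : Matrix (Fin n) (Fin n) ℝ)
    (X : Matrix (Fin n) (Fin d) ℝ) (c : Fin C) :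
    Differentiable ℝ (fun W : EuclideanSpace ℝ (Fin d × Fin C) =>
      sgcSumLogits K A X W c) := by
  unfold sgcSumLogits
  apply Differentiable.fun_sum
  intro j _
  have hp : Differentiable ℝ (fun W : EuclideanSpace ℝ (Fin d × Fin C) => W (j, c)) :=
    (EuclideanSpace.proj (𝕜 := ℝ) ((j, c) : Fin d × Fin C)).differentiable
  exact (differentiable_const _).mul hp

lemma ce_differentiable {n d C : ℕ} (hC : 0 < C) (K : ℕ) (A : Matrix (Fin n) (Fin n) ℝ)
    (X : Matrix (Fin n) (Fin d) ℝ) (y : Fin C) :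
    Differentiable ℝ (fun W : EuclideanSpace ℝ (Fin d × Fin C) =>
      crossEntropy (sgcSumLogits K A X W) y) := by
  unfold crossEntropy
  apply Differentiable.sub
  · have hsum : Differentiable ℝ (fun W : EuclideanSpace ℝ (Fin d × Fin C) =>
        ∑ c, Real.exp (sgcSumLogits K A X W c)) := by
      apply Differentiable.fun_sum
      intro c _
      exact (sgc_differentiable K A X c).exp
    intro W
    apply DifferentiableAt.log (hsum W)
    have hpos : (0:ℝ) < ∑ c, Real.exp (sgcSumLogits K A X W c) :=
      Finset.sum_pos (fun c _ => Real.exp_pos _) ⟨⟨0, hC⟩, Finset.mem_univ _⟩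
    exact ne_of_gt hpos
  · exact sgc_differentiable K A X y

lemma ce_convex_combo {n d C : ℕ} (hC : 0 < C) (K : ℕ) (A : Matrix (Fin n) (Fin n) ℝ)
    (X : Matrix (Fin n) (Fin d) ℝ) (yc : Fin C) {a b : ℝ}
    (ha : 0 ≤ a) (hb : 0 ≤ b) (hab : a + b = 1)
    (x v : EuclideanSpace ℝ (Fin d × Fin C)) :
    crossEntropy (sgcSumLogits K A X (a • x + b • v)) yc
      ≤ a * crossEntropy (sgcSumLogits K A X x) yc
        + b * crossEntropy (sgcSumLogits K A X v) yc := by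
  unfold crossEntropy
  simp only [sgc_lin]
  have hlse := lse_convex_ineq hC (fun c => sgcSumLogits K A X x c)
    (fun c => sgcSumLogits K A X v c) ha hb hab
  linarith

/-- Proposition 1 of the paper (sum-pooling case): if the gradient gap is largest at the
0-th epoch, the one-step matching loss bounds the minimal suboptimality. -/
theorem one_step_matching_proposition_sum_pooling
    (C d K N N' : ℕ) (hC : 1 ≤ C) (hd : 1 ≤ d) (hK : 1 ≤ K) (hN' : 1 ≤ N')
    (m : Fin N → ℕ)
    (A : ∀ i : Fin N, Matrix (Fin (m i)) (Fin (m i)) ℝ)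
    (X : ∀ i : Fin N, Matrix (Fin (m i)) (Fin d) ℝ)
    (y : Fin N → Fin C)
    (n : Fin N' → ℕ)
    (A' : ∀ i : Fin N', Matrix (Fin (n i)) (Fin (n i)) ℝ)
    (X' : ∀ i : Fin N', Matrix (Fin (n i)) (Fin d) ℝ)
    (y' : Fin N' → Fin C)
    (lossT lossS : EuclideanSpace ℝ (Fin d × Fin C) → ℝ)
    (hlossT : lossT = fun W => ∑ i, crossEntropy (sgcSumLogits K (A i) (X i) W) (y i))
    (hlossS : lossS = fun W =>
      (1 / (N' : ℝ)) * ∑ i, crossEntropy (sgcSumLogits K (A' i) (X' i) W) (y' i))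
    (L : ℝ)
    (hL : L = (((C : ℝ) - 1) / ((C : ℝ) * (N' : ℝ))) *
      Real.sqrt (∑ i, ∑ j, (∑ u, ∑ u', ((A' i) ^ K) u u' * X' i u' j) ^ 2))
    (hLpos : 0 < L)
    (M : ℝ) (hM : 0 < M) (T : ℕ) (hT : 1 ≤ T)
    (η : ℝ) (hη : η = M / (Real.sqrt T * L))
    (W : ℕ → EuclideanSpace ℝ (Fin d × Fin C))
    (hstep : ∀ t, t + 2 ≤ T → W (t + 1) = W t - η • gradient lossS (W t))
    (Wstar : EuclideanSpace ℝ (Fin d × Fin C))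
    (hbdd : ∀ t < T, ‖W t - Wstar‖ ≤ Real.sqrt 2 * M)
    (hgrad : ∀ V : EuclideanSpace ℝ (Fin d × Fin C), ‖gradient lossS V‖ ≤ L)
    (hmax : ∀ t < T, ‖gradient lossT (W t) - gradient lossS (W t)‖ ≤
      ‖gradient lossT (W 0) - gradient lossS (W 0)‖) :
    ∃ t < T, lossT (W t) - lossT Wstar ≤
      Real.sqrt 2 * M * ‖gradient lossT (W 0) - gradient lossS (W 0)‖ +
        (3 * M / (2 * Real.sqrt T)) * (((C : ℝ) - 1) / ((C : ℝ) * (N' : ℝ))) *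
          Real.sqrt (∑ i, ∑ j, (∑ u, ∑ u', ((A' i) ^ K) u u' * X' i u' j) ^ 2) := by
  -- rewrite the constant in the goal in terms of `L`
  rw [show (3 * M / (2 * Real.sqrt T)) * (((C : ℝ) - 1) / ((C : ℝ) * (N' : ℝ))) *
      Real.sqrt (∑ i, ∑ j, (∑ u, ∑ u', ((A' i) ^ K) u u' * X' i u' j) ^ 2)
      = (3 * M / (2 * Real.sqrt T)) * L by rw [mul_assoc, ← hL]]
  -- convexity and differentiability of `lossT`
  have hdiffT : Differentiable ℝ lossT := by
    rw [hlossT]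
    apply Differentiable.fun_sum
    intro i _
    exact ce_differentiable hC K (A i) (X i) (y i)
  have hconvT : ConvexOn ℝ Set.univ lossT := by
    rw [hlossT]
    refine ⟨convex_univ, fun x _ v _ a b ha hb hab => ?_⟩
    simp only [smul_eq_mul]
    calc ∑ i, crossEntropy (sgcSumLogits K (A i) (X i) (a • x + b • v)) (y i)
        ≤ ∑ i, (a * crossEntropy (sgcSumLogits K (A i) (X i) x) (y i)
            + b * crossEntropy (sgcSumLogits K (A i) (X i) v) (y i)) :=
          Finset.sum_le_sum fun i _ => ce_convex_combo hC K (A i) (X i) (y i) ha hb hab x v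
      _ = a * ∑ i, crossEntropy (sgcSumLogits K (A i) (X i) x) (y i)
            + b * ∑ i, crossEntropy (sgcSumLogits K (A i) (X i) v) (y i) := by
          rw [Finset.sum_add_distrib, ← Finset.mul_sum, ← Finset.mul_sum]
  have hsupp : ∀ x v : EuclideanSpace ℝ (Fin d × Fin C),
      lossT x - lossT v ≤ ⟪gradient lossT x, x - v⟫ :=
    fun x v => convex_support_ineq hconvT hdiffT x v
  -- main optimization argument
  have hTR : (0:ℝ) < (T:ℝ) := by exact_mod_cast Nat.lt_of_lt_of_le Nat.zero_lt_one hT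
  have hs : (0:ℝ) < Real.sqrt T := Real.sqrt_pos.2 hTR
  have hs2 : (Real.sqrt T)^2 = (T:ℝ) := Real.sq_sqrt hTR.le
  have hηpos : 0 < η := by rw [hη]; positivity
  set g : ℕ → EuclideanSpace ℝ (Fin d × Fin C) := fun t => gradient lossS (W t) with hg
  set D : ℝ := ‖gradient lossT (W 0) - g 0‖ with hD
  set a : ℕ → ℝ := fun t => ‖W t - Wstar‖^2 with ha
  set bb : ℕ → ℝ := fun t => ‖(W t - η • g t) - Wstar‖^2 with hbb
  have hstep1 : ∀ t < T, lossT (W t) - lossT Wstar ≤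
      Real.sqrt 2 * M * D + ((a t - bb t)/(2*η) + η/2 * L^2) := by
    intro t ht
    have h1 : lossT (W t) - lossT Wstar ≤ ⟪gradient lossT (W t), W t - Wstar⟫ :=
      hsupp _ _
    have h2 : ⟪gradient lossT (W t), W t - Wstar⟫
        = ⟪gradient lossT (W t) - g t, W t - Wstar⟫ + ⟪g t, W t - Wstar⟫ := by
      rw [← inner_add_left, sub_add_cancel]
    have h3 : ⟪gradient lossT (W t) - g t, W t - Wstar⟫ ≤ Real.sqrt 2 * M * D := by
      calc ⟪gradient lossT (W t) - g t, W t - Wstar⟫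
          ≤ ‖gradient lossT (W t) - g t‖ * ‖W t - Wstar‖ := real_inner_le_norm _ _
        _ ≤ D * (Real.sqrt 2 * M) :=
            mul_le_mul (hmax t ht) (hbdd t ht) (norm_nonneg _) (by rw [hD]; positivity)
        _ = Real.sqrt 2 * M * D := by ring
    have expand : bb t = a t - 2*η*⟪g t, W t - Wstar⟫ + η^2 * ‖g t‖^2 := by
      have hrange : (W t - η • g t) - Wstar = (W t - Wstar) - η • g t := by abel
      rw [hbb]
      simp only [hrange]
      rw [norm_sub_sq_real, real_inner_smul_right, norm_smul,
        real_inner_comm (W t - Wstar) (g t)]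
      rw [ha]
      simp only [mul_pow, sq_abs, Real.norm_eq_abs]
      ring
    have h4 : ⟪g t, W t - Wstar⟫ = (a t - bb t)/(2*η) + η/2 * ‖g t‖^2 := by
      rw [expand]; field_simp; ring
    have h5 : η/2 * ‖g t‖^2 ≤ η/2 * L^2 := by
      apply mul_le_mul_of_nonneg_left _ (by positivity)
      exact pow_le_pow_left₀ (norm_nonneg _) (hgrad _) 2
    linarith
  have htel : ∑ t ∈ Finset.range T, (a t - bb t) ≤ 2 * M^2 := by
    obtain ⟨T', rfl⟩ : ∃ T', T = T' + 1 := ⟨T - 1, by omega⟩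
    rw [Finset.sum_sub_distrib, Finset.sum_range_succ' a, Finset.sum_range_succ bb]
    have he : ∀ i ∈ Finset.range T', a (i+1) = bb i := by
      intro i hi
      rw [Finset.mem_range] at hi
      have hw := hstep i (by omega)
      rw [ha, hbb]
      simp only [hw]
      rfl
    rw [Finset.sum_congr rfl he]
    have h0 : a 0 ≤ 2*M^2 := by
      have hb0 := hbdd 0 (by omega)
      have hsq : ‖W 0 - Wstar‖^2 ≤ (Real.sqrt 2 * M)^2 :=
        pow_le_pow_left₀ (norm_nonneg _) hb0 2
      rw [mul_pow, Real.sq_sqrt (by norm_num : (2:ℝ) ≥ 0)] at hsq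
      show ‖W 0 - Wstar‖^2 ≤ 2*M^2
      linarith
    have hbnn : 0 ≤ bb T' := by rw [hbb]; positivity
    linarith
  by_contra hcon
  push_neg at hcon
  set B : ℝ := Real.sqrt 2 * M * D + (3 * M / (2 * Real.sqrt T)) * L with hB
  have hsum : ∑ t ∈ Finset.range T, (lossT (W t) - lossT Wstar) ≤
      (T:ℝ) * (Real.sqrt 2 * M * D) + (2*M^2)/(2*η) + (T:ℝ) * (η/2 * L^2) := by
    calc ∑ t ∈ Finset.range T, (lossT (W t) - lossT Wstar)
        ≤ ∑ t ∈ Finset.range T,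
            (Real.sqrt 2 * M * D + ((a t - bb t)/(2*η) + η/2 * L^2)) := by
          apply Finset.sum_le_sum
          intro t ht
          exact hstep1 t (Finset.mem_range.mp ht)
      _ = (T:ℝ) * (Real.sqrt 2 * M * D) +
            (∑ t ∈ Finset.range T, (a t - bb t))/(2*η) + (T:ℝ) * (η/2 * L^2) := by
          rw [Finset.sum_add_distrib, Finset.sum_add_distrib, Finset.sum_const,
            Finset.card_range, ← Finset.sum_div, Finset.sum_const, Finset.card_range]
          ring
      _ ≤ (T:ℝ) * (Real.sqrt 2 * M * D) + (2*M^2)/(2*η) + (T:ℝ) * (η/2 * L^2) := by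
          gcongr
  have hlow : (T:ℝ) * B < ∑ t ∈ Finset.range T, (lossT (W t) - lossT Wstar) := by
    have hne : (Finset.range T).Nonempty := ⟨0, Finset.mem_range.mpr (by omega)⟩
    have hlt := Finset.sum_lt_sum_of_nonempty hne
      (f := fun _ => B) (g := fun t => lossT (W t) - lossT Wstar) ?_
    · simpa [Finset.sum_const, Finset.card_range, mul_comm] using hlt
    · intro t ht
      exact hcon t (Finset.mem_range.mp ht)
  have harith : (T:ℝ) * (Real.sqrt 2 * M * D) + (2*M^2)/(2*η) + (T:ℝ) * (η/2 * L^2)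
      = (T:ℝ) * B := by
    have hTs : (T:ℝ) = Real.sqrt T * Real.sqrt T := (Real.mul_self_sqrt hTR.le).symm
    rw [hB, hη, hTs]
    field_simp
    rw [Real.sqrt_sq hs.le]; ring
  rw [harith] at hsum
  exact absurd (lt_of_lt_of_le hlow hsum) (lt_irrefl _)
end

section
/- Let C ≥ 1, d ≥ 1, K ≥ 1. Let a real graph have adjacency matrix A ∈ ℝ^{N×N}, feature matrix X ∈ ℝ^{N×d} and node labels y_v ∈ {0,…,C−1} for v = 1,…,N, and let a synthetic graph have adjacency matrix A' ∈ ℝ^{N'×N'} with N' ≥ 1, feature matrix X' ∈ ℝ^{N'×d} and node labels y'_v. With the K-layer SGC node classifier f_W(A,X) = A^K X W ∈ ℝ^{N×C} for W ∈ ℝ^{d×C}, define ℓ_T(W) = Σ_{v=1}^{N} ℓ((A^K X W)_v, y_v) (the v-th row of logits) and ℓ_S(W) = (1/N') Σ_{v=1}^{N'} ℓ(((A')^K X' W)_v, y'_v), where ℓ is the softmax cross-entropy loss. Let L = ((C−1)/(C·N'))·‖(A')^K X'‖ (Frobenius norm) and assume L > 0. Fix M > 0, an integer T ≥ 1, set η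 = M/(√T·L), and let W_{t+1} = W_t − η·∇ℓ_S(W_t) starting from W_0 ∈ ℝ^{d×C}. Let W* ∈ ℝ^{d×C} and assume (i) ‖W_t − W*‖ ≤ √2·M for all 0 ≤ t ≤ T−1, and (ii) ‖∇ℓ_S(W)‖ ≤ L for all W. Then min_{0≤t≤T−1} (ℓ_T(W_t) − ℓ_T(W*)) ≤ (√2·M/T)·Σ_{t=0}^{T−1} ‖∇ℓ_T(W_t) − ∇ℓ_S(W_t)‖ + (3M/(2√T))·((C−1)/(C·N'))·‖(A')^K X'‖. -/
open scoped BigOperators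
open InnerProductSpace

lemma inner_gradient_eq' {E : Type*} [NormedAddCommGroup E] [InnerProductSpace ℝ E]
    [CompleteSpace E] (f : E → ℝ) (x u : E) : ⟪gradient f x, u⟫_ℝ = fderiv ℝ f x u := by
  rw [gradient]; exact InnerProductSpace.toDual_symm_apply

noncomputable def linCLM {d C : ℕ} (Bv : Fin d → ℝ) (c : Fin C) :
    EuclideanSpace ℝ (Fin d × Fin C) →L[ℝ] ℝ :=
  innerSL ℝ ((WithLp.equiv 2 _).symm fun jc : Fin d × Fin C =>
    if jc.2 = c then Bv jc.1 else 0)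

lemma linCLM_apply {d C : ℕ} (Bv : Fin d → ℝ) (c : Fin C)
    (W : EuclideanSpace ℝ (Fin d × Fin C)) :
    linCLM Bv c W = ∑ j, Bv j * W (j, c) := by
  simp only [linCLM, innerSL_apply_apply, PiLp.inner_apply, RCLike.inner_apply, conj_trivial]
  rw [Fintype.sum_prod_type]
  apply Finset.sum_congr rfl
  intro j _
  rw [Finset.sum_congr rfl (fun c' _ => by
    rw [WithLp.equiv_symm_apply])]
  simp [Finset.sum_ite_eq' Finset.univ c (fun c' => Bv j * W (j, c')), mul_comm]

noncomputable def Dmap {d C N : ℕ} (B : Fin N → Fin d → ℝ) (y : Fin N → Fin C)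
    (W : EuclideanSpace ℝ (Fin d × Fin C)) :
    EuclideanSpace ℝ (Fin d × Fin C) →L[ℝ] ℝ :=
  ∑ v, ((∑ c, Real.exp (linCLM (B v) c W))⁻¹ •
      (∑ c, Real.exp (linCLM (B v) c W) • linCLM (B v) c) - linCLM (B v) (y v))

lemma lse_grad_ineq {C : ℕ} (hC : 0 < C) (a b : Fin C → ℝ) :
    Real.log (∑ c, Real.exp (a c)) - Real.log (∑ c, Real.exp (b c)) ≤
      ∑ c, Real.exp (a c) / (∑ c', Real.exp (a c')) * (a c - b c) := by
  haveI : Nonempty (Fin C) := ⟨⟨0, hC⟩⟩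
  set S := ∑ c, Real.exp (a c) with hSdef
  have hS : 0 < S := Finset.sum_pos (fun c _ => Real.exp_pos _) Finset.univ_nonempty
  have hS' : 0 < ∑ c, Real.exp (b c) :=
    Finset.sum_pos (fun c _ => Real.exp_pos _) Finset.univ_nonempty
  set p : Fin C → ℝ := fun c => Real.exp (a c) / S with hp
  have hp0 : ∀ c, 0 < p c := fun c => div_pos (Real.exp_pos _) hS
  have hp1 : ∑ c, p c = 1 := by
    rw [hp]; rw [← Finset.sum_div, ← hSdef, div_self hS.ne']
  have jensen : Real.exp (∑ c, p c * (b c - Real.log (p c))) ≤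
      ∑ c, p c * Real.exp (b c - Real.log (p c)) := by
    have := convexOn_exp.map_sum_le (t := Finset.univ) (w := p)
      (p := fun c => b c - Real.log (p c)) (fun c _ => (hp0 c).le) hp1
      (fun c _ => Set.mem_univ _)
    simpa [smul_eq_mul] using this
  have hxc : ∀ c, p c * Real.exp (b c - Real.log (p c)) = Real.exp (b c) := by
    intro c
    rw [Real.exp_sub, Real.exp_log (hp0 c)]
    field_simp
    exact div_self (hp0 c).ne'
  have h1 : ∑ c, p c * (b c - Real.log (p c)) ≤ Real.log (∑ c, Real.exp (b c)) := by
    rw [Real.le_log_iff_exp_le hS']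
    exact jensen.trans_eq (Finset.sum_congr rfl fun c _ => hxc c)
  have hplog : ∀ c, Real.log (p c) = a c - Real.log S := by
    intro c
    rw [hp]
    rw [Real.log_div (Real.exp_pos _).ne' hS.ne', Real.log_exp]
  have hsum : ∑ c, p c * (b c - Real.log (p c)) =
      (∑ c, p c * (b c - a c)) + Real.log S := by
    calc ∑ c, p c * (b c - Real.log (p c))
        = ∑ c, (p c * (b c - a c) + p c * Real.log S) := by
          apply Finset.sum_congr rfl; intro c _; rw [hplog c]; ring
      _ = (∑ c, p c * (b c - a c)) + (∑ c, p c) * Real.log S := by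
          rw [Finset.sum_add_distrib, ← Finset.sum_mul]
      _ = _ := by rw [hp1]; ring
  have hneg : ∑ c, p c * (a c - b c) = -∑ c, p c * (b c - a c) := by
    rw [← Finset.sum_neg_distrib]
    apply Finset.sum_congr rfl; intro c _; ring
  have h2 : (∑ c, p c * (b c - a c)) + Real.log S ≤ Real.log (∑ c, Real.exp (b c)) := by
    rw [← hsum]; exact h1
  calc Real.log S - Real.log (∑ c, Real.exp (b c)) ≤ ∑ c, p c * (a c - b c) := by
        rw [hneg]; linarith
    _ = _ := rfl

lemma hasFDerivAt_nodeLoss {d C : ℕ} (hC : 0 < C) (Bv : Fin d → ℝ) (yv : Fin C)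
    (W : EuclideanSpace ℝ (Fin d × Fin C)) :
    HasFDerivAt (fun W' : EuclideanSpace ℝ (Fin d × Fin C) =>
        Real.log (∑ c, Real.exp (linCLM Bv c W')) - linCLM Bv yv W')
      ((∑ c, Real.exp (linCLM Bv c W))⁻¹ •
          (∑ c, Real.exp (linCLM Bv c W) • linCLM Bv c) - linCLM Bv yv) W := by
  haveI : Nonempty (Fin C) := ⟨⟨0, hC⟩⟩
  have hz : ∀ c : Fin C, HasFDerivAt (fun W' : EuclideanSpace ℝ (Fin d × Fin C) =>
      linCLM Bv c W') (linCLM Bv c) W := fun c => (linCLM Bv c).hasFDerivAt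
  have he : ∀ c : Fin C, HasFDerivAt (fun W' : EuclideanSpace ℝ (Fin d × Fin C) =>
      Real.exp (linCLM Bv c W')) (Real.exp (linCLM Bv c W) • linCLM Bv c) W :=
    fun c => (Real.hasDerivAt_exp (linCLM Bv c W)).comp_hasFDerivAt W (hz c)
  have hsum : HasFDerivAt (fun W' : EuclideanSpace ℝ (Fin d × Fin C) =>
      ∑ c, Real.exp (linCLM Bv c W'))
      (∑ c, Real.exp (linCLM Bv c W) • linCLM Bv c) W :=
    HasFDerivAt.fun_sum (fun c _ => he c)
  have hpos : 0 < ∑ c, Real.exp (linCLM Bv c W) :=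
    Finset.sum_pos (fun c _ => Real.exp_pos _) Finset.univ_nonempty
  have hlog := (Real.hasDerivAt_log hpos.ne').comp_hasFDerivAt W hsum
  exact hlog.sub (hz yv)

lemma hasFDerivAt_lossT {d C N : ℕ} (hC : 0 < C) (B : Fin N → Fin d → ℝ)
    (y : Fin N → Fin C) (W : EuclideanSpace ℝ (Fin d × Fin C)) :
    HasFDerivAt (fun W' : EuclideanSpace ℝ (Fin d × Fin C) =>
        ∑ v, (Real.log (∑ c, Real.exp (linCLM (B v) c W')) - linCLM (B v) (y v) W'))
      (Dmap B y W) W :=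
  HasFDerivAt.fun_sum (fun v _ => hasFDerivAt_nodeLoss hC (B v) (y v) W)

lemma key_convex {d C N : ℕ} (hC : 0 < C) (B : Fin N → Fin d → ℝ)
    (y : Fin N → Fin C) (W W' : EuclideanSpace ℝ (Fin d × Fin C)) :
    (∑ v, (Real.log (∑ c, Real.exp (linCLM (B v) c W)) - linCLM (B v) (y v) W)) -
      (∑ v, (Real.log (∑ c, Real.exp (linCLM (B v) c W')) - linCLM (B v) (y v) W')) ≤
    Dmap B y W (W - W') := by
  rw [← Finset.sum_sub_distrib]
  have hD : Dmap B y W (W - W') = ∑ v, ((∑ c, Real.exp (linCLM (B v) c W))⁻¹ *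
      (∑ c, Real.exp (linCLM (B v) c W) * (linCLM (B v) c W - linCLM (B v) c W'))
      - (linCLM (B v) (y v) W - linCLM (B v) (y v) W')) := by
    simp [Dmap, ContinuousLinearMap.sum_apply, ContinuousLinearMap.sub_apply,
      ContinuousLinearMap.smul_apply, map_sub, smul_eq_mul, Finset.mul_sum]
    simp only [mul_sub, Finset.sum_sub_distrib]
    ring
  rw [hD]
  apply Finset.sum_le_sum
  intro v _
  have h := lse_grad_ineq hC (fun c => linCLM (B v) c W) (fun c => linCLM (B v) c W')
  have hrw : ∑ c, Real.exp (linCLM (B v) c W) / (∑ c', Real.exp (linCLM (B v) c' W)) *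
        (linCLM (B v) c W - linCLM (B v) c W') =
      (∑ c, Real.exp (linCLM (B v) c W))⁻¹ *
        ∑ c, Real.exp (linCLM (B v) c W) * (linCLM (B v) c W - linCLM (B v) c W') := by
    rw [Finset.mul_sum]
    apply Finset.sum_congr rfl
    intro c _
    rw [div_eq_mul_inv]; ring
  rw [hrw] at h
  linarith

/-- The logits of node `v` under the `K`-layer SGC node classifier `A^K X W`. -/
noncomputable def sgcNodeLogits {n d C : ℕ} (K : ℕ)
    (A : Matrix (Fin n) (Fin n) ℝ) (X : Matrix (Fin n) (Fin d) ℝ)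
    (W : EuclideanSpace ℝ (Fin d × Fin C)) (v : Fin n) : Fin C → ℝ :=
  fun c => ∑ j, (∑ u, (A ^ K) v u * X u j) * W (j, c)

set_option maxHeartbeats 2000000
/-- Theorem 2 of the paper: one-step gradient matching bound for node classification
with a `K`-layer SGC node classifier. -/
theorem one_step_gradient_matching_node_classification
    (C d K N N' : ℕ) (hC : 1 ≤ C) (hd : 1 ≤ d) (hK : 1 ≤ K) (hN' : 1 ≤ N')
    (A : Matrix (Fin N) (Fin N) ℝ) (X : Matrix (Fin N) (Fin d) ℝ) (y : Fin N → Fin C)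
    (A' : Matrix (Fin N') (Fin N') ℝ) (X' : Matrix (Fin N') (Fin d) ℝ)
    (y' : Fin N' → Fin C)
    (lossT lossS : EuclideanSpace ℝ (Fin d × Fin C) → ℝ)
    (hlossT : lossT = fun W => ∑ v, crossEntropy (sgcNodeLogits K A X W v) (y v))
    (hlossS : lossS = fun W =>
      (1 / (N' : ℝ)) * ∑ v, crossEntropy (sgcNodeLogits K A' X' W v) (y' v))
    (L : ℝ)
    (hL : L = (((C : ℝ) - 1) / ((C : ℝ) * (N' : ℝ))) *
      Real.sqrt (∑ v, ∑ j, (∑ u, (A' ^ K) v u * X' u j) ^ 2))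
    (hLpos : 0 < L)
    (M : ℝ) (hM : 0 < M) (T : ℕ) (hT : 1 ≤ T)
    (η : ℝ) (hη : η = M / (Real.sqrt T * L))
    (W : ℕ → EuclideanSpace ℝ (Fin d × Fin C))
    (hstep : ∀ t, t + 2 ≤ T → W (t + 1) = W t - η • gradient lossS (W t))
    (Wstar : EuclideanSpace ℝ (Fin d × Fin C))
    (hbdd : ∀ t < T, ‖W t - Wstar‖ ≤ Real.sqrt 2 * M)
    (hgrad : ∀ V : EuclideanSpace ℝ (Fin d × Fin C), ‖gradient lossS V‖ ≤ L) :
    ∃ t < T, lossT (W t) - lossT Wstar ≤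
      (Real.sqrt 2 * M / T) *
          ∑ t ∈ Finset.range T, ‖gradient lossT (W t) - gradient lossS (W t)‖ +
        (3 * M / (2 * Real.sqrt T)) * (((C : ℝ) - 1) / ((C : ℝ) * (N' : ℝ))) *
          Real.sqrt (∑ v, ∑ j, (∑ u, (A' ^ K) v u * X' u j) ^ 2) := by
  
  haveI : Nonempty (Fin C) := ⟨⟨0, hC⟩⟩
  set B : Fin N → Fin d → ℝ := fun v j => ∑ u, (A ^ K) v u * X u j with hB
  have hlossT' : lossT = fun W' : EuclideanSpace ℝ (Fin d × Fin C) =>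
      ∑ v, (Real.log (∑ c, Real.exp (linCLM (B v) c W')) - linCLM (B v) (y v) W') := by
    rw [hlossT]; funext W'
    apply Finset.sum_congr rfl; intro v _
    simp [crossEntropy, sgcNodeLogits, linCLM_apply, hB]
  have hTpos : 0 < T := hT
  have hT0 : (0:ℝ) < T := by exact_mod_cast hTpos
  have hs : 0 < Real.sqrt T := Real.sqrt_pos.mpr hT0
  have hη0 : 0 < η := by rw [hη]; positivity
  have hconv : ∀ V : EuclideanSpace ℝ (Fin d × Fin C),
      lossT V - lossT Wstar ≤ ⟪gradient lossT V, V - Wstar⟫_ℝ := by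
    intro V
    have hfd : HasFDerivAt lossT (Dmap B y V) V := by
      rw [hlossT']; exact hasFDerivAt_lossT hC B y V
    rw [inner_gradient_eq', hfd.fderiv]
    conv_lhs => rw [hlossT']
    exact key_convex hC B y V Wstar
  have hstep2 : ∀ t, t + 2 ≤ T →
      ‖W (t+1) - Wstar‖^2 = ‖W t - Wstar‖^2
        - 2*η*⟪gradient lossS (W t), W t - Wstar⟫_ℝ
        + η^2 * ‖gradient lossS (W t)‖^2 := by
    intro t ht
    rw [hstep t ht, sub_right_comm, norm_sub_sq_real, real_inner_smul_right,
      norm_smul, Real.norm_eq_abs, abs_of_pos hη0, mul_pow, real_inner_comm]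
    ring
  have htel : ∀ n, n + 1 ≤ T →
      2*η*(∑ t ∈ Finset.range n, ⟪gradient lossS (W t), W t - Wstar⟫_ℝ) ≤
        ‖W 0 - Wstar‖^2 - ‖W n - Wstar‖^2 + η^2 * n * L^2 := by
    intro n
    induction n with
    | zero => intro _; simp
    | succ n ih =>
      intro hn
      have h1 := ih (by omega)
      have h2 := hstep2 n (by omega)
      have hg2 : ‖gradient lossS (W n)‖^2 ≤ L^2 := by
        have := hgrad (W n)
        nlinarith [norm_nonneg (gradient lossS (W n))]
      rw [Finset.sum_range_succ, mul_add]
      have hmul : η^2*‖gradient lossS (W n)‖^2 ≤ η^2*L^2 :=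
        mul_le_mul_of_nonneg_left hg2 (sq_nonneg η)
      have hc : η^2*((n:ℝ)+1)*L^2 = η^2*(n:ℝ)*L^2 + η^2*L^2 := by ring
      push_cast
      linarith
  have hT1 : T - 1 + 1 = T := Nat.sub_add_cancel hT
  have htel' := htel (T-1) (by omega)
  have hcast : ((T-1 : ℕ) : ℝ) = (T:ℝ) - 1 := by
    rw [Nat.cast_sub hT]; norm_num
  rw [hcast] at htel'
  have hlast : 2*η*⟪gradient lossS (W (T-1)), W (T-1) - Wstar⟫_ℝ ≤
      η^2*L^2 + ‖W (T-1) - Wstar‖^2 := by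
    have h1 : ⟪gradient lossS (W (T-1)), W (T-1) - Wstar⟫_ℝ ≤ L * ‖W (T-1) - Wstar‖ :=
      (real_inner_le_norm _ _).trans
        (mul_le_mul_of_nonneg_right (hgrad _) (norm_nonneg _))
    nlinarith [sq_nonneg (η*L - ‖W (T-1) - Wstar‖)]
  have ha0 : ‖W 0 - Wstar‖^2 ≤ 2*M^2 := by
    have h := hbdd 0 hTpos
    nlinarith [norm_nonneg (W 0 - Wstar), Real.sq_sqrt (by norm_num : (0:ℝ) ≤ 2),
      Real.sqrt_nonneg 2, hM]
  have hsumsplit : ∑ t ∈ Finset.range T, ⟪gradient lossS (W t), W t - Wstar⟫_ℝ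
      = (∑ t ∈ Finset.range (T-1), ⟪gradient lossS (W t), W t - Wstar⟫_ℝ)
        + ⟪gradient lossS (W (T-1)), W (T-1) - Wstar⟫_ℝ := by
    conv_lhs => rw [← hT1]
    rw [Finset.sum_range_succ]
  have hS1 : 2*η*(∑ t ∈ Finset.range T, ⟪gradient lossS (W t), W t - Wstar⟫_ℝ) ≤
      2*M^2 + η^2 * T * L^2 := by
    rw [hsumsplit, mul_add]
    have hid : η^2*((T:ℝ)-1)*L^2 + η^2*L^2 = η^2*(T:ℝ)*L^2 := by ring
    linarith
  have hTs : (T:ℝ) = Real.sqrt T * Real.sqrt T := (Real.mul_self_sqrt hT0.le).symm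
  have hval : 2*η*(3/2*M*L*Real.sqrt T) = 2*M^2 + η^2 * (T:ℝ) * L^2 := by
    have key : ∀ s : ℝ, 0 < s → (T:ℝ) = s*s →
        2*(M / (s * L))*(3/2*M*L*s) = 2*M^2 + (M / (s * L))^2 * (T:ℝ) * L^2 := by
      intro s hs0 hTeq
      rw [hTeq]
      field_simp
      ring
    rw [hη]
    exact key (Real.sqrt T) hs hTs
  have hS2 : ∑ t ∈ Finset.range T, ⟪gradient lossS (W t), W t - Wstar⟫_ℝ ≤
      3/2*M*L*Real.sqrt T :=
    le_of_mul_le_mul_left (hS1.trans_eq hval.symm) (by linarith)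
  have hper : ∀ t < T, lossT (W t) - lossT Wstar ≤
      Real.sqrt 2 * M * ‖gradient lossT (W t) - gradient lossS (W t)‖
        + ⟪gradient lossS (W t), W t - Wstar⟫_ℝ := by
    intro t ht
    have h1 := hconv (W t)
    have h2 := inner_sub_left (𝕜 := ℝ) (gradient lossT (W t)) (gradient lossS (W t))
      (W t - Wstar)
    have h3 : ⟪gradient lossT (W t) - gradient lossS (W t), W t - Wstar⟫_ℝ ≤
        ‖gradient lossT (W t) - gradient lossS (W t)‖ * (Real.sqrt 2 * M) :=
      (real_inner_le_norm _ _).trans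
        (mul_le_mul_of_nonneg_left (hbdd t ht) (norm_nonneg _))
    have hcomm : ‖gradient lossT (W t) - gradient lossS (W t)‖ * (Real.sqrt 2 * M)
        = Real.sqrt 2 * M * ‖gradient lossT (W t) - gradient lossS (W t)‖ := by ring
    rw [hcomm] at h3
    linarith
  have hsumT : ∑ t ∈ Finset.range T, (lossT (W t) - lossT Wstar) ≤
      Real.sqrt 2 * M *
          (∑ t ∈ Finset.range T, ‖gradient lossT (W t) - gradient lossS (W t)‖)
        + 3/2*M*L*Real.sqrt T := by
    calc ∑ t ∈ Finset.range T, (lossT (W t) - lossT Wstar)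
        ≤ ∑ t ∈ Finset.range T,
            (Real.sqrt 2 * M * ‖gradient lossT (W t) - gradient lossS (W t)‖
              + ⟪gradient lossS (W t), W t - Wstar⟫_ℝ) :=
          Finset.sum_le_sum (fun t ht => hper t (Finset.mem_range.mp ht))
      _ = Real.sqrt 2 * M *
            (∑ t ∈ Finset.range T, ‖gradient lossT (W t) - gradient lossS (W t)‖)
          + ∑ t ∈ Finset.range T, ⟪gradient lossS (W t), W t - Wstar⟫_ℝ := by
          rw [Finset.sum_add_distrib, Finset.mul_sum]
      _ ≤ _ := by linarith
  obtain ⟨t0, ht0mem, ht0⟩ := Finset.exists_min_image (Finset.range T)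
    (fun t => lossT (W t) - lossT Wstar) ⟨0, Finset.mem_range.mpr hTpos⟩
  refine ⟨t0, Finset.mem_range.mp ht0mem, ?_⟩
  have hmin : (T:ℝ) * (lossT (W t0) - lossT Wstar) ≤
      ∑ t ∈ Finset.range T, (lossT (W t) - lossT Wstar) := by
    have := Finset.card_nsmul_le_sum (Finset.range T)
      (fun t => lossT (W t) - lossT Wstar) (lossT (W t0) - lossT Wstar)
      (fun t ht => ht0 t ht)
    simpa [Finset.card_range, nsmul_eq_mul] using this
  rw [mul_assoc, ← hL]
  set Sd := ∑ t ∈ Finset.range T, ‖gradient lossT (W t) - gradient lossS (W t)‖ with hSd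
  have hfin : (T:ℝ) * (Real.sqrt 2 * M / T * Sd + 3*M/(2*Real.sqrt T) * L)
      = Real.sqrt 2 * M * Sd + 3/2*M*L*Real.sqrt T := by
    have key : ∀ s : ℝ, 0 < s → (T:ℝ) = s*s →
        (T:ℝ) * (Real.sqrt 2 * M / T * Sd + 3*M/(2*s) * L)
          = Real.sqrt 2 * M * Sd + 3/2*M*L*s := by
      intro s hs0 hTeq
      rw [hTeq]
      field_simp
    exact key (Real.sqrt T) hs hTs
  have hfinal : (T:ℝ) * (lossT (W t0) - lossT Wstar) ≤
      (T:ℝ) * (Real.sqrt 2 * M / T * Sd + 3*M/(2*Real.sqrt T) * L) := by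
    rw [hfin]
    linarith [hmin.trans hsumT]
  exact le_of_mul_le_mul_left hfinal hT0
end

section
/- Let E be a real Hilbert space and let f, g : E → ℝ be differentiable everywhere, with f convex, and denote their gradients by ∇f and ∇g. Let θ* ∈ E, M > 0, L ≥ 0, η > 0 and an integer T ≥ 1. Let θ_0, θ_1, …, θ_{T−1} ∈ E satisfy θ_{t+1} = θ_t − η·∇g(θ_t) for 0 ≤ t ≤ T−2. Assume ‖θ_t − θ*‖ ≤ √2·M for all 0 ≤ t ≤ T−1, and ‖∇g(θ)‖ ≤ L for all θ ∈ E. Then min_{0≤t≤T−1} (f(θ_t) − f(θ*)) ≤ (√2·M/T)·Σ_{t=0}^{T−1} ‖∇f(θ_t) − ∇g(θ_t)‖ + η·L²/2 + M²/(T·η). -/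
open scoped BigOperators
open scoped RealInnerProductSpace

lemma grad_convex_ineq' {E : Type*} [NormedAddCommGroup E] [InnerProductSpace ℝ E]
    [CompleteSpace E]
    (f : E → ℝ) (hf : Differentiable ℝ f) (hc : ConvexOn ℝ Set.univ f) (x y : E) :
    f x - f y ≤ ⟪gradient f x, x - y⟫ := by
  have hline : HasDerivAt (fun s : ℝ => x + s • (y - x)) (y - x) 0 := by
    simpa using ((hasDerivAt_id (0:ℝ)).smul_const (y - x)).const_add x
  have hfd : HasFDerivAt f (InnerProductSpace.toDual ℝ E (gradient f x)) x :=
    (hasGradientAt_iff_hasFDerivAt).mp (hf x).hasGradientAt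
  have hφ : HasDerivAt (fun s : ℝ => f (x + s • (y - x))) ⟪gradient f x, y - x⟫ 0 := by
    have := hfd.comp_hasDerivAt_of_eq 0 hline (by simp)
    simpa [Function.comp_def] using this
  have hcφ : ConvexOn ℝ Set.univ (fun s : ℝ => f (x + s • (y - x))) := by
    have h := hc.comp_affineMap (AffineMap.lineMap x y)
    have : (f ∘ (AffineMap.lineMap x y)) = fun s : ℝ => f (x + s • (y - x)) := by
      funext s
      simp [AffineMap.lineMap_apply, add_comm]
    rw [this] at h
    simpa using h
  have hslope := hcφ.le_slope_of_hasDerivAt (Set.mem_univ (0:ℝ)) (Set.mem_univ 1)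
    zero_lt_one hφ
  rw [slope_def_field] at hslope
  simp only [one_smul, zero_smul, add_zero, sub_zero, div_one] at hslope
  have hy : x + (y - x) = y := by abel
  rw [hy] at hslope
  rw [inner_sub_right] at hslope ⊢
  linarith

private lemma tR_eq (T : ℕ) (M L η S : ℝ) (hTpos : (0:ℝ) < T) (hη : 0 < η) :
    (T:ℝ) * (Real.sqrt 2 * M / T * S + η * L ^ 2 / 2 + M ^ 2 / (T * η))
      = Real.sqrt 2 * M * S + η * L ^ 2 / 2 * T + M ^ 2 / η := by
  have hT0 : (T:ℝ) ≠ 0 := ne_of_gt hTpos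
  field_simp

/-- Abstract core estimate in the proof of Theorem 1: gradient descent on `g`,
convexity of `f`, bounded iterates and bounded gradients of `g` yield a bound on the
minimal suboptimality of `f` along the trajectory, before choosing the learning rate. -/
theorem one_step_matching_core_estimate
    {E : Type*} [NormedAddCommGroup E] [InnerProductSpace ℝ E] [CompleteSpace E]
    (f g : E → ℝ) (hf : Differentiable ℝ f) (hg : Differentiable ℝ g)
    (hconv : ConvexOn ℝ Set.univ f)
    (θstar : E) (M L η : ℝ) (hM : 0 < M) (hL : 0 ≤ L) (hη : 0 < η)
    (T : ℕ) (hT : 1 ≤ T)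
    (θ : ℕ → E) (hstep : ∀ t, t + 2 ≤ T → θ (t + 1) = θ t - η • gradient g (θ t))
    (hbdd : ∀ t < T, ‖θ t - θstar‖ ≤ Real.sqrt 2 * M)
    (hgrad : ∀ x : E, ‖gradient g x‖ ≤ L) :
    ∃ t < T, f (θ t) - f θstar ≤
      (Real.sqrt 2 * M / T) *
          ∑ t ∈ Finset.range T, ‖gradient f (θ t) - gradient g (θ t)‖ +
        η * L ^ 2 / 2 + M ^ 2 / (T * η) := by
  set S := ∑ t ∈ Finset.range T, ‖gradient f (θ t) - gradient g (θ t)‖ with hS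
  set R := (Real.sqrt 2 * M / T) * S + η * L ^ 2 / 2 + M ^ 2 / (T * η) with hR
  -- the telescoping potential
  set c : ℕ → ℝ := fun t =>
    if t < T then ‖θ t - θstar‖ ^ 2
    else ‖θ (T - 1) - η • gradient g (θ (T - 1)) - θstar‖ ^ 2 with hc
  clear_value S R c
  have hTpos : (0:ℝ) < T := by exact_mod_cast hT
  -- per-step bound
  have key : ∀ t < T, f (θ t) - f θstar ≤
      ‖gradient f (θ t) - gradient g (θ t)‖ * (Real.sqrt 2 * M)
        + (c t - c (t + 1)) / (2 * η) + η * L ^ 2 / 2 := by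
    intro t ht
    set u := θ t - θstar with hu
    set v := gradient g (θ t) with hv
    have h1 : f (θ t) - f θstar ≤ ⟪gradient f (θ t), u⟫ :=
      grad_convex_ineq' f hf hconv (θ t) θstar
    have h2 : ⟪gradient f (θ t), u⟫
        = ⟪gradient f (θ t) - v, u⟫ + ⟪v, u⟫ := by
      rw [inner_sub_left]; ring
    have h3 : ⟪gradient f (θ t) - v, u⟫ ≤ ‖gradient f (θ t) - v‖ * (Real.sqrt 2 * M) := by
      refine (real_inner_le_norm _ _).trans ?_
      exact mul_le_mul_of_nonneg_left (hbdd t ht) (norm_nonneg _)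
    -- identify c (t+1)
    have hct : c t = ‖u‖ ^ 2 := by simp [hc, ht, hu]
    have hct1 : c (t + 1) = ‖u - η • v‖ ^ 2 := by
      rcases lt_or_ge (t + 1) T with h | h
      · have hstep' := hstep t (by omega)
        have : θ (t + 1) - θstar = u - η • v := by rw [hstep', hu, hv]; abel
        simp [hc, h, this]
      · have hTt : T - 1 = t := by omega
        have : ¬ (t + 1 < T) := by omega
        simp only [hc, this, if_false, hTt]
        congr 1
        rw [hu, hv]
        abel
    -- gradient step inner product bound
    have hns : ‖u - η • v‖ ^ 2 = ‖u‖ ^ 2 - 2 * ⟪u, η • v⟫ + ‖η • v‖ ^ 2 := by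
      have := @norm_sub_sq_real E _ _ u (η • v)
      linarith
    have hsm : ⟪u, η • v⟫ = η * ⟪u, v⟫ := real_inner_smul_right u v η
    have hnsm : ‖η • v‖ ^ 2 = η ^ 2 * ‖v‖ ^ 2 := by
      rw [norm_smul, mul_pow, Real.norm_eq_abs, sq_abs]
    have hvL : ‖v‖ ≤ L := hgrad (θ t)
    have h4 : ⟪v, u⟫ ≤ (c t - c (t + 1)) / (2 * η) + η * L ^ 2 / 2 := by
      rw [hct, hct1]
      have hcomm : ⟪v, u⟫ = ⟪u, v⟫ := real_inner_comm u v
      rw [hcomm]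
      have h2η : (0:ℝ) < 2 * η := by linarith
      rw [div_add' _ _ _ (ne_of_gt h2η), le_div_iff₀ h2η]
      have hv2 : ‖v‖ ^ 2 ≤ L ^ 2 := by nlinarith [norm_nonneg v]
      nlinarith [sq_nonneg η]
    linarith
  -- sum the per-step bounds
  have hsum : ∑ t ∈ Finset.range T, (f (θ t) - f θstar) ≤ T * R := by
    have hle : ∑ t ∈ Finset.range T, (f (θ t) - f θstar) ≤
        ∑ t ∈ Finset.range T,
          (‖gradient f (θ t) - gradient g (θ t)‖ * (Real.sqrt 2 * M)
            + (c t - c (t + 1)) / (2 * η) + η * L ^ 2 / 2) := by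
      refine Finset.sum_le_sum fun t ht => key t (Finset.mem_range.mp ht)
    have hsplit : ∑ t ∈ Finset.range T,
          (‖gradient f (θ t) - gradient g (θ t)‖ * (Real.sqrt 2 * M)
            + (c t - c (t + 1)) / (2 * η) + η * L ^ 2 / 2)
        = S * (Real.sqrt 2 * M) + (c 0 - c T) / (2 * η) + T * (η * L ^ 2 / 2) := by
      rw [Finset.sum_add_distrib, Finset.sum_add_distrib, ← Finset.sum_mul,
        ← Finset.sum_div, Finset.sum_range_sub' c, Finset.sum_const,
        Finset.card_range, nsmul_eq_mul, ← hS]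
    have hc0 : c 0 ≤ 2 * M ^ 2 := by
      have h0 : (0:ℕ) < T := hT
      have := hbdd 0 h0
      have h2 : ‖θ 0 - θstar‖ ^ 2 ≤ (Real.sqrt 2 * M) ^ 2 := by
        nlinarith [norm_nonneg (θ 0 - θstar), Real.sqrt_nonneg 2,
          mul_nonneg (Real.sqrt_nonneg 2) hM.le]
      have h3 : (Real.sqrt 2 * M) ^ 2 = 2 * M ^ 2 := by
        rw [mul_pow, Real.sq_sqrt (by norm_num : (2:ℝ) ≥ 0)]
      simp only [hc, h0, if_true]
      linarith
    have hcT : 0 ≤ c T := by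
      simp only [hc, lt_irrefl, if_false]
      positivity
    have htel : (c 0 - c T) / (2 * η) ≤ M ^ 2 / η := by
      rw [div_le_div_iff₀ (by linarith) hη]
      nlinarith
    have hTR : (T:ℝ) * R = Real.sqrt 2 * M * S + η * L ^ 2 / 2 * T + M ^ 2 / η := by
      rw [hR]; exact tR_eq T M L η S hTpos hη
    calc ∑ t ∈ Finset.range T, (f (θ t) - f θstar)
        ≤ S * (Real.sqrt 2 * M) + (c 0 - c T) / (2 * η) + T * (η * L ^ 2 / 2) := by
          rw [← hsplit]; exact hle
      _ ≤ Real.sqrt 2 * M * S + η * L ^ 2 / 2 * T + M ^ 2 / η := by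
          have e1 : S * (Real.sqrt 2 * M) = Real.sqrt 2 * M * S := by ring
          have e2 : (T:ℝ) * (η * L ^ 2 / 2) = η * L ^ 2 / 2 * T := by ring
          linarith
      _ = (T:ℝ) * R := hTR.symm
  -- extract a minimizer
  have hne : (Finset.range T).Nonempty := ⟨0, Finset.mem_range.mpr hT⟩
  have hsum' : ∑ t ∈ Finset.range T, (f (θ t) - f θstar) ≤
      ∑ _t ∈ Finset.range T, R := by
    rw [Finset.sum_const, Finset.card_range, nsmul_eq_mul]
    exact hsum
  obtain ⟨t, ht, hle⟩ := Finset.exists_le_of_sum_le hne hsum'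
  exact ⟨t, Finset.mem_range.mp ht, hle⟩
end

section
/- Let E be a real Hilbert space and let f, g : E → ℝ be differentiable everywhere, with f convex, and denote their gradients by ∇f and ∇g. Let θ* ∈ E, M > 0, L > 0, an integer T ≥ 1, and set η = M/(√T·L). Let θ_0, θ_1, …, θ_{T−1} ∈ E satisfy θ_{t+1} = θ_t − η·∇g(θ_t) for 0 ≤ t ≤ T−2. Assume ‖θ_t − θ*‖ ≤ √2·M for all 0 ≤ t ≤ T−1, and ‖∇g(θ)‖ ≤ L for all θ ∈ E. Then min_{0≤t≤T−1} (f(θ_t) − f(θ*)) ≤ (√2·M/T)·Σ_{t=0}^{T−1} ‖∇f(θ_t) − ∇g(θ_t)‖ + (3·M·L)/(2·√T). -/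
open scoped BigOperators
open RealInnerProductSpace Topology Filter

private lemma convex_grad_ineq' {E : Type*} [NormedAddCommGroup E] [InnerProductSpace ℝ E]
    [CompleteSpace E]
    (f : E → ℝ) (hf : Differentiable ℝ f) (hconv : ConvexOn ℝ Set.univ f) (x y : E) :
    f x - f y ≤ ⟪gradient f x, x - y⟫ := by
  have hline : HasDerivAt (fun s : ℝ => x + s • (y - x)) (y - x) 0 := by
    simpa using ((hasDerivAt_id (0:ℝ)).smul_const (y - x)).const_add x
  have hF : HasFDerivAt f (InnerProductSpace.toDual ℝ E (gradient f x)) (x + (0:ℝ) • (y - x)) := by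
    simpa using (hf x).hasGradientAt.hasFDerivAt
  have hd : HasDerivAt (fun s : ℝ => f (x + s • (y - x))) ⟪gradient f x, y - x⟫ 0 := by
    have := hF.comp_hasDerivAt (0:ℝ) hline
    simp only [InnerProductSpace.toDual_apply_apply] at this
    exact this
  have htend : Filter.Tendsto (slope (fun s : ℝ => f (x + s • (y - x))) 0) (𝓝[>] (0:ℝ))
      (𝓝 ⟪gradient f x, y - x⟫) :=
    (hasDerivAt_iff_tendsto_slope.mp hd).mono_left (nhdsWithin_mono _ (fun s hs => ne_of_gt hs))
  have hle : ⟪gradient f x, y - x⟫ ≤ f y - f x := by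
    refine le_of_tendsto htend ?_
    filter_upwards [Ioc_mem_nhdsGT_of_mem (Set.left_mem_Ico.mpr one_pos)] with s hs
    have hs0 : 0 < s := hs.1
    have hcv := hconv.2 (Set.mem_univ x) (Set.mem_univ y)
      (by linarith [hs.2] : (0:ℝ) ≤ 1 - s) hs0.le (by ring)
    have hpt : (1 - s) • x + s • y = x + s • (y - x) := by module
    rw [hpt] at hcv
    have h0 : f (x + (0:ℝ) • (y - x)) = f x := by simp
    rw [slope_def_field, h0, sub_zero, div_le_iff₀ hs0]
    simp only [smul_eq_mul] at hcv
    linarith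
  have hneg : ⟪gradient f x, x - y⟫ = -⟪gradient f x, y - x⟫ := by
    rw [← inner_neg_right, neg_sub]
  linarith

/-- Abstract form of Theorem 1 with the optimal learning rate `η = M / (√T · L)`. -/
theorem one_step_matching_optimal_rate
    {E : Type*} [NormedAddCommGroup E] [InnerProductSpace ℝ E] [CompleteSpace E]
    (f g : E → ℝ) (hf : Differentiable ℝ f) (hg : Differentiable ℝ g)
    (hconv : ConvexOn ℝ Set.univ f)
    (θstar : E) (M L : ℝ) (hM : 0 < M) (hL : 0 < L)
    (T : ℕ) (hT : 1 ≤ T)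
    (η : ℝ) (hη : η = M / (Real.sqrt T * L))
    (θ : ℕ → E) (hstep : ∀ t, t + 2 ≤ T → θ (t + 1) = θ t - η • gradient g (θ t))
    (hbdd : ∀ t < T, ‖θ t - θstar‖ ≤ Real.sqrt 2 * M)
    (hgrad : ∀ x : E, ‖gradient g x‖ ≤ L) :
    ∃ t < T, f (θ t) - f θstar ≤
      (Real.sqrt 2 * M / T) *
          ∑ t ∈ Finset.range T, ‖gradient f (θ t) - gradient g (θ t)‖ +
        3 * M * L / (2 * Real.sqrt T) := by
  set s : ℝ := Real.sqrt T with hsdef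
  have hTpos : (0:ℝ) < T := by exact_mod_cast hT
  have hs : 0 < s := Real.sqrt_pos.mpr hTpos
  have hsT : s * s = (T:ℝ) := Real.mul_self_sqrt hTpos.le
  have hη0 : 0 < η := by rw [hη]; positivity
  set b : ℕ → ℝ := fun t => ‖θ t - θstar‖ ^ 2 with hb
  set c : ℕ → ℝ := fun t => ‖θ t - η • gradient g (θ t) - θstar‖ ^ 2 with hc
  set Δ : ℕ → ℝ := fun t => ‖gradient f (θ t) - gradient g (θ t)‖ with hΔ
  -- per-step inequality
  have key : ∀ t < T, 2 * η * (f (θ t) - f θstar) ≤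
      (b t - c t) + η ^ 2 * L ^ 2 + 2 * η * (Real.sqrt 2 * M * Δ t) := by
    intro t ht
    have h1 : f (θ t) - f θstar ≤ ⟪gradient f (θ t), θ t - θstar⟫ :=
      convex_grad_ineq' f hf hconv (θ t) θstar
    have h5 : ⟪gradient f (θ t), θ t - θstar⟫ =
        ⟪gradient g (θ t), θ t - θstar⟫ + ⟪gradient f (θ t) - gradient g (θ t), θ t - θstar⟫ := by
      rw [inner_sub_left]; ring
    have h2 : ⟪gradient f (θ t) - gradient g (θ t), θ t - θstar⟫ ≤ Real.sqrt 2 * M * Δ t := by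
      calc ⟪gradient f (θ t) - gradient g (θ t), θ t - θstar⟫
          ≤ Δ t * ‖θ t - θstar‖ := real_inner_le_norm _ _
        _ ≤ Δ t * (Real.sqrt 2 * M) := by
            exact mul_le_mul_of_nonneg_left (hbdd t ht) (norm_nonneg _)
        _ = Real.sqrt 2 * M * Δ t := by ring
    have h3 : c t = b t - 2 * η * ⟪gradient g (θ t), θ t - θstar⟫
        + η ^ 2 * ‖gradient g (θ t)‖ ^ 2 := by
      have hre : θ t - η • gradient g (θ t) - θstar = (θ t - θstar) - η • gradient g (θ t) := by
        abel
      simp only [hc, hb, hre]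
      rw [norm_sub_sq_real, real_inner_smul_right, norm_smul]
      rw [real_inner_comm]
      rw [Real.norm_eq_abs, abs_of_pos hη0]
      ring
    have h4 : η ^ 2 * ‖gradient g (θ t)‖ ^ 2 ≤ η ^ 2 * L ^ 2 :=
      mul_le_mul_of_nonneg_left (pow_le_pow_left₀ (norm_nonneg _) (hgrad (θ t)) 2) (sq_nonneg η)
    have m1 : 2 * η * (f (θ t) - f θstar) ≤
        2 * η * (⟪gradient g (θ t), θ t - θstar⟫ + Real.sqrt 2 * M * Δ t) := by
      apply mul_le_mul_of_nonneg_left _ (by positivity)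
      linarith
    linarith
  -- telescoping
  obtain ⟨n, rfl⟩ : ∃ n, T = n + 1 := ⟨T - 1, (Nat.succ_pred_eq_of_pos hT).symm⟩
  have htel : ∑ t ∈ Finset.range (n + 1), (b t - c t) ≤ 2 * M ^ 2 := by
    have hct : ∀ t ∈ Finset.range n, b t - c t = b t - b (t + 1) := by
      intro t ht
      have hst := hstep t (by simpa using Nat.succ_lt_succ (Finset.mem_range.mp ht))
      simp only [hb, hc, hst]
    rw [Finset.sum_range_succ, Finset.sum_congr rfl hct, Finset.sum_range_sub' b]
    have hb0 : b 0 ≤ 2 * M ^ 2 := by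
      have := hbdd 0 (Nat.succ_pos n)
      have h2M : (0:ℝ) ≤ Real.sqrt 2 * M := by positivity
      calc b 0 = ‖θ 0 - θstar‖ ^ 2 := rfl
        _ ≤ (Real.sqrt 2 * M) ^ 2 := by
            exact pow_le_pow_left₀ (norm_nonneg _) this 2
        _ = 2 * M ^ 2 := by
            rw [mul_pow, Real.sq_sqrt (by norm_num : (0:ℝ) ≤ 2)]
    have hcn : 0 ≤ c n := by positivity
    have hbn : 0 ≤ b n := by positivity
    linarith
  -- sum the per-step inequalities
  set S : ℝ := ∑ t ∈ Finset.range (n + 1), Δ t with hS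
  have hmulsum : 2 * η * (Real.sqrt 2 * M * S) =
      ∑ t ∈ Finset.range (n + 1), 2 * η * (Real.sqrt 2 * M * Δ t) := by
    rw [hS, Finset.mul_sum, Finset.mul_sum]
  have hsum : 2 * η * ∑ t ∈ Finset.range (n + 1), (f (θ t) - f θstar) ≤
      2 * M ^ 2 + (n + 1 : ℝ) * (η ^ 2 * L ^ 2) + 2 * η * (Real.sqrt 2 * M * S) := by
    have h := Finset.sum_le_sum (fun t ht => key t (Finset.mem_range.mp ht))
    rw [Finset.sum_add_distrib, Finset.sum_add_distrib, Finset.sum_const, Finset.card_range,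
      nsmul_eq_mul] at h
    rw [Finset.mul_sum, hmulsum]
    push_cast at h ⊢
    linarith [htel]
  -- final arithmetic
  have harith : 2 * M ^ 2 + (n + 1 : ℝ) * (η ^ 2 * L ^ 2) + 2 * η * (Real.sqrt 2 * M * S) =
      2 * η * ((n + 1 : ℝ) * ((Real.sqrt 2 * M / (n + 1 : ℝ)) * S + 3 * M * L / (2 * s))) := by
    have hLs : s * L ≠ 0 := by positivity
    have hn1 : ((n:ℝ) + 1) ≠ 0 := by positivity
    have hT' : ((n:ℝ) + 1) = s * s := by push_cast at hsT ⊢; linarith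
    rw [hη]
    push_cast
    rw [hT']
    field_simp
    ring
  have hfin : ∑ t ∈ Finset.range (n + 1), (f (θ t) - f θstar) ≤
      ∑ t ∈ Finset.range (n + 1),
        ((Real.sqrt 2 * M / ((n:ℝ) + 1)) * S + 3 * M * L / (2 * s)) := by
    rw [Finset.sum_const, Finset.card_range, nsmul_eq_mul]
    have h2η : (0:ℝ) < 2 * η := by linarith
    have := hsum.trans_eq harith
    push_cast at this ⊢
    nlinarith [this]
  obtain ⟨t, ht, hle⟩ := Finset.exists_le_of_sum_le (Finset.nonempty_range_add_one) hfin
  refine ⟨t, Finset.mem_range.mp ht, ?_⟩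
  push_cast at hle ⊢
  convert hle using 2 <;> push_cast <;> ring
end
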